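/- Define p : 𝓜 → ℤ × ℤ by p(1) = (0,1) and, writing (a,b) = p(X), p(SX) = (a+b, b) and p(TX) = (−b, −a−b) (letters prepended). Then p is injective and its image is exactly the set {(0,1)} ∪ {(a,b) ∈ ℤ² : ab ≥ 1 and gcd(|a|,|b|) = 1}. -/

import Mathlib

namespace Markov

/-- The ambient space ℝ³. -/
abbrev V3 : Type := Fin 3 → ℝ

/-- Standard basis vectors ẽ₁, ẽ₂, ẽ₃ (indexed by `Fin 3`). -/
noncomputable def e (i : Fin 3) : V3 := Pi.single i 1

/-- The two generating letters of the free monoid 𝓜. -/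
inductive Lt
  | S
  | T
  deriving DecidableEq

/-- Elements of the free monoid 𝓜 on `{S, T}`, as words (lists of letters
read left to right); the monoid operation is `++` and the identity is `[]`. -/
abbrev Word := List Lt

/-- A word is a trunk word iff it consists only of the letter `S`
(otherwise it is a branch word). -/
def IsTrunk (X : Word) : Prop := ∀ l ∈ X, l = Lt.S

/-- Boolean trunk test. -/
def trunkB (X : Word) : Bool := X.all (fun l => decide (l = Lt.S))

/-- One mutation step for the triple `(g_K, g_S, g_T)`; the flag `trunk`
records whether the word being extended (on the right) is a trunk word. -/
noncomputable def gStep (trunk : Bool) (l : Lt) (v : V3 × V3 × V3) :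
    V3 × V3 × V3 :=
  match l with
  | Lt.S => (2 • v.1 - v.2.1, v.1, v.2.2)
  | Lt.T =>
    if trunk then (2 • v.2.1 - v.2.2, v.2.1, v.1)
    else (2 • v.1 - v.2.2, v.1, v.2.1)

/-- Auxiliary recursion computing the g-vectors from the reversed word
(head of the list = last letter of the word). -/
noncomputable def gRev (k s t : Fin 3) : Word → V3 × V3 × V3
  | [] => (2 • e s - e k, e s, e t)
  | l :: X => gStep (trunkB X) l (gRev k s t X)

/-- The triple of modified g-vectors `(g_K^X, g_S^X, g_T^X)` for the
permutation `(k₀, s₀, t₀) = (k, s, t)` of the indices. -/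
noncomputable def g (k s t : Fin 3) (X : Word) : V3 × V3 × V3 :=
  gRev k s t X.reverse

/-- One mutation step for the triple `(c_K, c_S, c_T)`. -/
noncomputable def cStep (trunk : Bool) (l : Lt) (v : V3 × V3 × V3) :
    V3 × V3 × V3 :=
  match l with
  | Lt.S => (-v.2.1, v.1 + 2 • v.2.1, v.2.2)
  | Lt.T =>
    if trunk then (-v.2.2, v.2.1 + 2 • v.2.2, v.1)
    else (-v.2.2, v.1 + 2 • v.2.2, v.2.1)

noncomputable def cRev (k s t : Fin 3) : Word → V3 × V3 × V3
  | [] => (-(e k), e s + 2 • e k, e t)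
  | l :: X => cStep (trunkB X) l (cRev k s t X)

/-- The triple of modified c-vectors `(c_K^X, c_S^X, c_T^X)`. -/
noncomputable def c (k s t : Fin 3) (X : Word) : V3 × V3 × V3 :=
  cRev k s t X.reverse

/-- `g_F^X = g_S^X + g_T^X − g_K^X`. -/
noncomputable def gF (k s t : Fin 3) (X : Word) : V3 :=
  (g k s t X).2.1 + (g k s t X).2.2 - (g k s t X).1

/-- `v_SK^X = g_K^X − g_S^X`. -/
noncomputable def vSK (k s t : Fin 3) (X : Word) : V3 :=
  (g k s t X).1 - (g k s t X).2.1

/-- `v_TK^X = g_K^X − g_T^X`. -/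
noncomputable def vTK (k s t : Fin 3) (X : Word) : V3 :=
  (g k s t X).1 - (g k s t X).2.2

/-- `c_F^X = c_K^X + c_S^X + c_T^X`. -/
noncomputable def cF (k s t : Fin 3) (X : Word) : V3 :=
  (c k s t X).1 + (c k s t X).2.1 + (c k s t X).2.2

/-- `x_SK^X = c_K^X + c_S^X`. -/
noncomputable def xSK (k s t : Fin 3) (X : Word) : V3 :=
  (c k s t X).1 + (c k s t X).2.1

/-- `x_TK^X = −(c_K^X + c_T^X)`. -/
noncomputable def xTK (k s t : Fin 3) (X : Word) : V3 :=
  -((c k s t X).1 + (c k s t X).2.2)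

/-- Closed cone spanned by two vectors. -/
def C2 (v1 v2 : V3) : Set V3 :=
  {x | ∃ la lb : ℝ, 0 ≤ la ∧ 0 ≤ lb ∧ x = la • v1 + lb • v2}

/-- Relatively open cone spanned by two vectors. -/
def C2o (v1 v2 : V3) : Set V3 :=
  {x | ∃ la lb : ℝ, 0 < la ∧ 0 < lb ∧ x = la • v1 + lb • v2}

/-- Closed cone spanned by three vectors. -/
def C3 (v1 v2 v3 : V3) : Set V3 :=
  {x | ∃ la lb lc : ℝ, 0 ≤ la ∧ 0 ≤ lb ∧ 0 ≤ lc ∧ x = la • v1 + lb • v2 + lc • v3}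

/-- Relatively open cone spanned by four vectors. -/
def C4o (v1 v2 v3 v4 : V3) : Set V3 :=
  {x | ∃ la lb lc ld : ℝ, 0 < la ∧ 0 < lb ∧ 0 < lc ∧ 0 < ld ∧
    x = la • v1 + lb • v2 + lc • v3 + ld • v4}

/-- The set `U_∘^X = C°(g_S^X, g_T^X, v_SK^X, v_TK^X)`. -/
noncomputable def Uo (k s t : Fin 3) (X : Word) : Set V3 :=
  C4o (g k s t X).2.1 (g k s t X).2.2 (vSK k s t X) (vTK k s t X)

/-- The set `U^W = U_∘^W ∪ C(g_S^W, g_T^W)`. -/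
noncomputable def Uset (k s t : Fin 3) (W : Word) : Set V3 :=
  Uo k s t W ∪ C2 (g k s t W).2.1 (g k s t W).2.2

/-- Recursion step for the Calkin–Wilf-type coefficients `q`. -/
def qstep (l : Lt) (p : ℤ × ℤ) : ℤ × ℤ :=
  match l with
  | Lt.S => (p.1 + p.2, p.2)
  | Lt.T => (p.2, p.1 + p.2)

/-- `qfun init X` : the pair obtained from `init` by the recursion
`q^{SX} = (a+b, b)`, `q^{TX} = (b, a+b)` (letters prepended). -/
def qfun (init : ℤ × ℤ) : Word → ℤ × ℤ
  | [] => init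
  | l :: X => qstep l (qfun init X)

/-- Recursion step for the coefficients `p`. -/
def pstep (l : Lt) (p : ℤ × ℤ) : ℤ × ℤ :=
  match l with
  | Lt.S => (p.1 + p.2, p.2)
  | Lt.T => (-p.2, -p.1 - p.2)

/-- `pfun init X` : the pair obtained from `init` by the recursion
`p^{SX} = (a+b, b)`, `p^{TX} = (−b, −a−b)` (letters prepended). -/
def pfun (init : ℤ × ℤ) : Word → ℤ × ℤ
  | [] => init
  | l :: X => pstep l (pfun init X)

/-- The three index data `σ₁ = (1,3,2)`, `σ₂ = (2,1,3)`, `σ₃ = (3,2,1)`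
(written with indices `0,1,2` instead of `1,2,3`). -/
def sig : Fin 3 → Fin 3 × Fin 3 × Fin 3 :=
  ![(0, 2, 1), (1, 0, 2), (2, 1, 0)]

/-- Modified g-vectors for the `i`-th subtree of the Markov quiver. -/
noncomputable def gM (i : Fin 3) (X : Word) : V3 × V3 × V3 :=
  g (sig i).1 (sig i).2.1 (sig i).2.2 X

/-- `𝔤ᵢ = ẽ_{s₀(i)} + ẽ_{t₀(i)} − ẽ_{k₀(i)}`. -/
noncomputable def giFrak (i : Fin 3) : V3 :=
  e (sig i).2.1 + e (sig i).2.2 - e (sig i).1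

/-- The set `𝔊ᵢ` of modified g-vectors in the `i`-th subtree. -/
noncomputable def Gset (i : Fin 3) : Set V3 :=
  {v | ∃ a b : ℤ, 1 ≤ a ∧ 1 ≤ b ∧ Int.gcd a b = 1 ∧
      v = giFrak i + (a : ℝ) • (e (sig i).1 - e (sig i).2.2) +
        (b : ℝ) • (e (sig i).2.1 - e (sig i).1)} ∪
    {e (sig i).2.1}

/-- The support `𝒮` of the G-fan of the Markov quiver. -/
noncomputable def Supp : Set V3 :=
  C3 (e 0) (e 1) (e 2) ∪
    ⋃ (i : Fin 3), ⋃ (X : Word), C3 (gM i X).1 (gM i X).2.1 (gM i X).2.2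

/-- The half space `V = {x : x₁+x₂+x₃ > 0} ∪ {0}`. -/
def Vhalf : Set V3 := {x | 0 < x 0 + x 1 + x 2} ∪ {0}


/-- The "good" set: pairs with same-sign nonzero entries which are coprime. -/
def PGood (p : ℤ × ℤ) : Prop :=
  ((1 ≤ p.1 ∧ 1 ≤ p.2) ∨ (p.1 ≤ -1 ∧ p.2 ≤ -1)) ∧ Int.gcd p.1 p.2 = 1

lemma cop_sub_right {a b : ℤ} (h : Int.gcd a b = 1) : Int.gcd (a - b) b = 1 := by
  rw [← Int.isCoprime_iff_gcd_eq_one] at h ⊢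
  simpa [sub_eq_add_neg] using h.add_mul_left_left (-1)

lemma cop_sub_neg {a b : ℤ} (h : Int.gcd a b = 1) : Int.gcd (a - b) (-a) = 1 := by
  rw [← Int.isCoprime_iff_gcd_eq_one] at h ⊢
  have h2 := (h.symm.add_mul_left_left (-1)).neg_left.neg_right
  have e1 : -(b + a * (-1)) = a - b := by ring
  rwa [e1] at h2

lemma cop_add_right {a b : ℤ} (h : Int.gcd a b = 1) : Int.gcd (a + b) b = 1 := by
  rw [← Int.isCoprime_iff_gcd_eq_one] at h ⊢
  simpa using h.add_mul_left_left 1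

lemma cop_T {a b : ℤ} (h : Int.gcd a b = 1) : Int.gcd (-b) (-a - b) = 1 := by
  rw [← Int.isCoprime_iff_gcd_eq_one] at h ⊢
  have h2 := (h.symm.add_mul_left_right 1).neg_left.neg_right
  have e1 : -(a + b * 1) = -a - b := by ring
  rwa [e1] at h2

lemma pfun_cons (l : Lt) (X : Word) (init : ℤ × ℤ) :
    pfun init (l :: X) = pstep l (pfun init X) := rfl

lemma pGood_all : ∀ X : Word, pfun (0, 1) X = (0, 1) ∨ PGood (pfun (0, 1) X) := by
  intro X
  induction X with
  | nil => left; rfl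
  | cons l X ih =>
    right
    rw [pfun_cons]
    obtain h | ⟨hs, hg⟩ := ih
    · rw [h]
      cases l with
      | S => exact ⟨Or.inl ⟨le_refl 1, le_refl 1⟩, by decide⟩
      | T => exact ⟨Or.inr ⟨le_refl (-1), le_refl (-1)⟩, by decide⟩
    · set p := pfun (0, 1) X with hp
      cases l with
      | S =>
        refine ⟨?_, cop_add_right hg⟩
        simp only [pstep]
        omega
      | T =>
        refine ⟨?_, cop_T hg⟩
        simp only [pstep]
        omega

lemma reach : ∀ (n : ℕ) (a b : ℤ), a.natAbs + b.natAbs = n →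
    ((1 ≤ a ∧ 1 ≤ b) ∨ (a ≤ -1 ∧ b ≤ -1)) → Int.gcd a b = 1 →
    ∃ X, pfun (0, 1) X = (a, b) := by
  intro n
  induction n using Nat.strong_induction_on with
  | _ n ih =>
    intro a b hn hs hg
    rcases eq_or_ne a b with rfl | hne
    · have : a.natAbs = 1 := by
        have := Int.gcd_self (a := a)
        omega
      rcases hs with ⟨h1, _⟩ | ⟨h1, _⟩
      · have : a = 1 := by omega
        subst this
        exact ⟨[Lt.S], rfl⟩
      · have : a = -1 := by omega
        subst this
        exact ⟨[Lt.T], rfl⟩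
    · rcases hs with ⟨h1, h2⟩ | ⟨h1, h2⟩
      · rcases lt_or_gt_of_ne hne with hab | hab
        · -- a < b, positive: T preimage (a-b, -a)
          obtain ⟨X, hX⟩ := ih ((a - b).natAbs + (-a).natAbs) (by omega)
            (a - b) (-a) rfl (Or.inr ⟨by omega, by omega⟩) (cop_sub_neg hg)
          refine ⟨Lt.T :: X, ?_⟩
          rw [pfun_cons, hX]
          simp only [pstep, Prod.mk.injEq, and_true]
          omega
        · obtain ⟨X, hX⟩ := ih ((a - b).natAbs + b.natAbs) (by omega)
            (a - b) b rfl (Or.inl ⟨by omega, h2⟩) (cop_sub_right hg)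
          refine ⟨Lt.S :: X, ?_⟩
          rw [pfun_cons, hX]
          simp only [pstep, Prod.mk.injEq, and_true]
          omega
      · rcases lt_or_gt_of_ne hne with hab | hab
        · -- a < b, negative: S preimage (a-b, b)
          obtain ⟨X, hX⟩ := ih ((a - b).natAbs + b.natAbs) (by omega)
            (a - b) b rfl (Or.inr ⟨by omega, h2⟩) (cop_sub_right hg)
          refine ⟨Lt.S :: X, ?_⟩
          rw [pfun_cons, hX]
          simp only [pstep, Prod.mk.injEq, and_true]
          omega
        · obtain ⟨X, hX⟩ := ih ((a - b).natAbs + (-a).natAbs) (by omega)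
            (a - b) (-a) rfl (Or.inl ⟨by omega, by omega⟩) (cop_sub_neg hg)
          refine ⟨Lt.T :: X, ?_⟩
          rw [pfun_cons, hX]
          simp only [pstep, Prod.mk.injEq, and_true]
          omega

lemma signs_of (X : Word) {qa qb : ℤ} (hE : pfun (0, 1) X = (qa, qb)) :
    (qa = 0 ∧ qb = 1) ∨ (1 ≤ qa ∧ 1 ≤ qb) ∨ (qa ≤ -1 ∧ qb ≤ -1) := by
  rcases pGood_all X with h | ⟨hs, _⟩
  · rw [hE] at h
    exact Or.inl (by simpa [Prod.ext_iff] using h)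
  · rw [hE] at hs
    exact Or.inr hs

lemma nil_of_eq : ∀ Y : Word, pfun (0, 1) Y = (0, 1) → Y = [] := by
  intro Y hY
  cases Y with
  | nil => rfl
  | cons l Y =>
    exfalso
    rw [pfun_cons] at hY
    rcases hE : pfun (0, 1) Y with ⟨qa, qb⟩
    have hq := signs_of Y hE
    rw [hE] at hY
    cases l <;> simp only [pstep, Prod.mk.injEq, and_true] at hY <;> omega

lemma pfun_inj : ∀ X Y : Word, pfun (0, 1) X = pfun (0, 1) Y → X = Y := by
  intro X
  induction X with
  | nil => intro Y h; exact (nil_of_eq Y h.symm).symm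
  | cons l X ih =>
    intro Y h
    cases Y with
    | nil =>
      exact absurd (nil_of_eq (l :: X) h) (by simp)
    | cons m Y =>
      rw [pfun_cons, pfun_cons] at h
      rcases hP : pfun (0, 1) X with ⟨pa, pb⟩
      rcases hQ : pfun (0, 1) Y with ⟨qa, qb⟩
      have hp := signs_of X hP
      have hq := signs_of Y hQ
      rw [hP, hQ] at h
      cases l <;> cases m <;>
        simp only [pstep, Prod.mk.injEq, and_true] at h
      · have : X = Y := ih Y (by rw [hP, hQ, Prod.mk.injEq]; omega)
        rw [this]
      · exfalso; omega
      · exfalso; omega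
      · have : X = Y := ih Y (by rw [hP, hQ, Prod.mk.injEq]; omega)
        rw [this]

/-- enumeration of the coefficient pairs for c-vectors. -/
theorem stmt_11 :
    Function.Injective (pfun (0, 1)) ∧
    Set.range (pfun (0, 1)) =
      {((0 : ℤ), (1 : ℤ))} ∪
        {p : ℤ × ℤ | 1 ≤ p.1 * p.2 ∧ Int.gcd p.1 p.2 = 1} := by
  constructor
  · intro X Y h
    exact pfun_inj X Y h
  · ext p
    constructor
    · rintro ⟨X, rfl⟩
      rcases pGood_all X with h | ⟨hs, hg⟩
      · left; exact h
      · right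
        refine ⟨?_, hg⟩
        rcases hs with ⟨h1, h2⟩ | ⟨h1, h2⟩
        · nlinarith
        · nlinarith
    · rintro (h | ⟨hmul, hg⟩)
      · exact ⟨[], h.symm⟩
      · have hs : (1 ≤ p.1 ∧ 1 ≤ p.2) ∨ (p.1 ≤ -1 ∧ p.2 ≤ -1) := by
          have hpos : 0 < p.1 * p.2 := by linarith
          rcases mul_pos_iff.mp hpos with ⟨h1, h2⟩ | ⟨h1, h2⟩
          · left; omega
          · right; omega
        obtain ⟨X, hX⟩ := reach (p.1.natAbs + p.2.natAbs) p.1 p.2 rfl hs hg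
        exact ⟨X, by rw [hX]⟩


end Markov
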